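/- arXiv:0802.1549 — 3 statements merged into one kernel-verified Lean document; each statement's English description precedes it below -/
import Mathlib

section
/- The integral ∫_{(0,∞)²} (λ_1² − 6λ_1 + 7) λ_1 λ_2 |λ_1 − λ_2| e^{−λ_1 − 2λ_2} dλ_1 dλ_2 is strictly positive. -/
open MeasureTheory Set Filter

namespace DimTwoAux

lemma tendsto_pow_exp (n : ℕ) {c : ℝ} (hc : 0 < c) :
    Tendsto (fun x : ℝ => x ^ n * Real.exp (-c * x)) atTop (nhds 0) := by
  apply (tendsto_rpow_mul_exp_neg_mul_atTop_nhds_zero (n : ℝ) c hc).congr'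
  filter_upwards [eventually_gt_atTop (0 : ℝ)] with x hx
  rw [Real.rpow_natCast]

lemma intOn_pow_exp (n : ℕ) {c : ℝ} (hc : 0 < c) :
    IntegrableOn (fun x : ℝ => x ^ n * Real.exp (-c * x)) (Set.Ioi 0) := by
  apply integrable_of_isBigO_exp_neg (b := c / 2) (by linarith)
  · exact Continuous.continuousOn (by fun_prop)
  · apply Asymptotics.isBigO_of_div_tendsto_nhds
      (Filter.Eventually.of_forall fun x hx => absurd hx (Real.exp_ne_zero _)) 0
    apply (tendsto_pow_exp n (show (0:ℝ) < c/2 by linarith)).congr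
    intro x
    simp only [Pi.div_apply]
    rw [mul_div_assoc, ← Real.exp_sub]
    congr 2
    ring

lemma poly_hasDeriv (a4 a3 a2 a1 a0 y : ℝ) :
    HasDerivAt (fun t : ℝ => a4*t^4 + a3*t^3 + a2*t^2 + a1*t + a0)
      (4*a4*y^3 + 3*a3*y^2 + 2*a2*y + a1) y := by
  have h := (((((hasDerivAt_pow 4 y).const_mul a4).add
      ((hasDerivAt_pow 3 y).const_mul a3)).add
      ((hasDerivAt_pow 2 y).const_mul a2)).add
      ((hasDerivAt_id' y).const_mul a1)).add_const a0
  refine h.congr_deriv ?_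
  norm_num
  ring

lemma expPoly_hasDeriv (c a4 a3 a2 a1 a0 y : ℝ) :
    HasDerivAt (fun t : ℝ => Real.exp (c*t) * (a4*t^4 + a3*t^3 + a2*t^2 + a1*t + a0))
      (Real.exp (c*y) * (c*(a4*y^4 + a3*y^3 + a2*y^2 + a1*y + a0)
        + (4*a4*y^3 + 3*a3*y^2 + 2*a2*y + a1))) y := by
  have he : HasDerivAt (fun t : ℝ => Real.exp (c*t)) (Real.exp (c*y) * c) y := by
    simpa using ((hasDerivAt_id' y).const_mul c).exp
  have h := he.mul (poly_hasDeriv a4 a3 a2 a1 a0 y)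
  refine h.congr_deriv ?_
  ring

lemma inner_eval {x : ℝ} (hx : 0 < x) :
    ∫ y in Ioi (0:ℝ), y * |x - y| * Real.exp (-2*y)
      = (x-1)/4 + Real.exp (-2*x) * (x+1)/2 := by
  have hsplit : Ioi (0:ℝ) = Ioc 0 x ∪ Ioi x := (Ioc_union_Ioi_eq_Ioi hx.le).symm
  have hcont : Continuous fun y : ℝ => y * |x - y| * Real.exp (-2*y) :=
    (continuous_id.mul ((continuous_const.sub continuous_id).abs)).mul (by fun_prop)
  have hint1 : IntegrableOn (fun y : ℝ => y * |x - y| * Real.exp (-2*y)) (Ioc 0 x) :=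
    hcont.integrableOn_Ioc
  have hbase : IntegrableOn (fun y : ℝ => y^2*Real.exp (-2*y) - x*(y^1*Real.exp (-2*y)))
      (Ioi 0) := (intOn_pow_exp 2 two_pos).sub ((intOn_pow_exp 1 two_pos).const_mul x)
  have hint2' : IntegrableOn (fun y : ℝ => y*(y - x)*Real.exp (-2*y)) (Ioi x) :=
    (hbase.mono_set (Ioi_subset_Ioi hx.le)).congr_fun (fun y _ => by ring) measurableSet_Ioi
  have habs : EqOn (fun y : ℝ => y * |x - y| * Real.exp (-2*y))
      (fun y => y * (y - x) * Real.exp (-2*y)) (Ioi x) := fun y hy => by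
    simp only
    rw [abs_of_neg (by simp at hy; linarith : x - y < 0), neg_sub]
  have hint2 : IntegrableOn (fun y : ℝ => y * |x - y| * Real.exp (-2*y)) (Ioi x) :=
    hint2'.congr_fun (fun y hy => ((habs hy).symm : _)) measurableSet_Ioi
  rw [hsplit, setIntegral_union (Ioc_disjoint_Ioi le_rfl) measurableSet_Ioi hint1 hint2]
  have e1 : ∫ y in Ioc (0:ℝ) x, y * |x - y| * Real.exp (-2*y)
      = Real.exp (-2*x)*(x+1)/4 + (x-1)/4 := by
    have hEq : EqOn (fun y : ℝ => y * |x - y| * Real.exp (-2*y))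
        (fun y => y * (x - y) * Real.exp (-2*y)) (Ioc 0 x) := fun y hy => by
      simp only
      rw [abs_of_nonneg (by linarith [hy.2] : (0:ℝ) ≤ x - y)]
    rw [setIntegral_congr_fun measurableSet_Ioc hEq, ← intervalIntegral.integral_of_le hx.le]
    have hder : ∀ y ∈ uIcc (0:ℝ) x,
        HasDerivAt (fun t : ℝ => Real.exp ((-2)*t) * ((0:ℝ)*t^4 + 0*t^3 + (1/2)*t^2
          + ((1-x)/2)*t + (1-x)/4)) (y * (x - y) * Real.exp (-2*y)) y := by
      intro y _
      have h := expPoly_hasDeriv (-2) 0 0 (1/2) ((1-x)/2) ((1-x)/4) y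
      convert h using 1
      ring
    rw [intervalIntegral.integral_eq_sub_of_hasDerivAt hder
      ((Continuous.mul (continuous_id.mul (continuous_const.sub continuous_id))
        (by fun_prop)).intervalIntegrable 0 x)]
    simp [Real.exp_zero]
    ring
  have e2 : ∫ y in Ioi x, y * |x - y| * Real.exp (-2*y) = Real.exp (-2*x)*(x+1)/4 := by
    rw [setIntegral_congr_fun measurableSet_Ioi habs]
    have hder : ∀ y ∈ Ici x,
        HasDerivAt (fun t : ℝ => Real.exp ((-2)*t) * ((0:ℝ)*t^4 + 0*t^3 + (-(1:ℝ)/2)*t^2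
          + ((x-1)/2)*t + (x-1)/4)) (y * (y - x) * Real.exp (-2*y)) y := by
      intro y _
      have h := expPoly_hasDeriv (-2) 0 0 (-(1:ℝ)/2) ((x-1)/2) ((x-1)/4) y
      convert h using 1
      ring
    have hB : Tendsto (fun t : ℝ => Real.exp ((-2)*t) * ((0:ℝ)*t^4 + 0*t^3 + (-(1:ℝ)/2)*t^2
        + ((x-1)/2)*t + (x-1)/4)) atTop (nhds 0) := by
      have h := ((((tendsto_pow_exp 4 two_pos).const_mul (0:ℝ)).add
        ((tendsto_pow_exp 3 two_pos).const_mul (0:ℝ))).add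
        ((tendsto_pow_exp 2 two_pos).const_mul (-(1:ℝ)/2))).add
        (((tendsto_pow_exp 1 two_pos).const_mul ((x-1)/2)).add
          ((tendsto_pow_exp 0 two_pos).const_mul ((x-1)/4)))
      norm_num at h
      exact h.congr fun t => by ring
    rw [integral_Ioi_of_hasDerivAt_of_tendsto' hder hint2' hB]
    ring
  rw [e1, e2]
  ring

lemma outer_eval :
    ∫ x in Ioi (0:ℝ), ((x^2 - 6*x + 7) * x * Real.exp (-1*x))
      * ((x-1)/4 + Real.exp (-2*x) * (x+1)/2) = 175/324 := by
  have h3 : ∀ t : ℝ, Real.exp ((-3)*t) = Real.exp (-1*t) * Real.exp (-2*t) := by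
    intro t
    rw [← Real.exp_add]
    congr 1
    ring
  have hderiv : ∀ t ∈ Ici (0:ℝ),
      HasDerivAt (fun t : ℝ =>
        Real.exp ((-1)*t) * ((-(1:ℝ)/4)*t^4 + (3/4)*t^3 + (-1)*t^2 + (-(1:ℝ)/4)*t + (-(1:ℝ)/4))
        + Real.exp ((-3)*t) * ((-(1:ℝ)/6)*t^4 + (11/18)*t^3 + (4/9)*t^2 + (-(47:ℝ)/54)*t
            + (-(47:ℝ)/162)))
      (((t^2 - 6*t + 7) * t * Real.exp (-1*t)) * ((t-1)/4 + Real.exp (-2*t) * (t+1)/2)) t := by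
    intro t _
    have h := (expPoly_hasDeriv (-1) (-(1:ℝ)/4) (3/4) (-1) (-(1:ℝ)/4) (-(1:ℝ)/4) t).add
      (expPoly_hasDeriv (-3) (-(1:ℝ)/6) (11/18) (4/9) (-(47:ℝ)/54) (-(47:ℝ)/162) t)
    refine h.congr_deriv ?_
    rw [h3 t]
    ring
  have hint : IntegrableOn (fun t : ℝ =>
      ((t^2 - 6*t + 7) * t * Real.exp (-1*t)) * ((t-1)/4 + Real.exp (-2*t) * (t+1)/2))
      (Ioi 0) := by
    have h := (((((intOn_pow_exp 4 one_pos).const_mul (1/4)).add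
      ((intOn_pow_exp 3 one_pos).const_mul (-(7:ℝ)/4))).add
      ((intOn_pow_exp 2 one_pos).const_mul (13/4))).add
      ((intOn_pow_exp 1 one_pos).const_mul (-(7:ℝ)/4))).add
      (((((intOn_pow_exp 4 (by norm_num : (0:ℝ) < 3)).const_mul (1/2)).add
        ((intOn_pow_exp 3 (by norm_num : (0:ℝ) < 3)).const_mul (-(5:ℝ)/2))).add
        ((intOn_pow_exp 2 (by norm_num : (0:ℝ) < 3)).const_mul (1/2))).add
        ((intOn_pow_exp 1 (by norm_num : (0:ℝ) < 3)).const_mul (7/2)))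
    exact IntegrableOn.congr_fun h (fun t _ => by simp only [Pi.add_apply]; rw [h3 t]; ring) measurableSet_Ioi
  have htend : Tendsto (fun t : ℝ =>
      Real.exp ((-1)*t) * ((-(1:ℝ)/4)*t^4 + (3/4)*t^3 + (-1)*t^2 + (-(1:ℝ)/4)*t + (-(1:ℝ)/4))
      + Real.exp ((-3)*t) * ((-(1:ℝ)/6)*t^4 + (11/18)*t^3 + (4/9)*t^2 + (-(47:ℝ)/54)*t
          + (-(47:ℝ)/162))) atTop (nhds 0) := by
    have h := (((((tendsto_pow_exp 4 one_pos).const_mul (-(1:ℝ)/4)).add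
      ((tendsto_pow_exp 3 one_pos).const_mul (3/4))).add
      ((tendsto_pow_exp 2 one_pos).const_mul (-1))).add
      (((tendsto_pow_exp 1 one_pos).const_mul (-(1:ℝ)/4)).add
        ((tendsto_pow_exp 0 one_pos).const_mul (-(1:ℝ)/4)))).add
      (((((tendsto_pow_exp 4 (by norm_num : (0:ℝ) < 3)).const_mul (-(1:ℝ)/6)).add
        ((tendsto_pow_exp 3 (by norm_num : (0:ℝ) < 3)).const_mul (11/18))).add
        ((tendsto_pow_exp 2 (by norm_num : (0:ℝ) < 3)).const_mul (4/9))).add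
        (((tendsto_pow_exp 1 (by norm_num : (0:ℝ) < 3)).const_mul (-(47:ℝ)/54)).add
          ((tendsto_pow_exp 0 (by norm_num : (0:ℝ) < 3)).const_mul (-(47:ℝ)/162))))
    norm_num at h
    exact h.congr fun t => by ring
  rw [integral_Ioi_of_hasDerivAt_of_tendsto' hderiv hint htend]
  norm_num [Real.exp_zero]

end DimTwoAux

open DimTwoAux

theorem dim_two_integral_pos :
    0 <
      ∫ p in Set.Ioi (0 : ℝ) ×ˢ Set.Ioi (0 : ℝ),
        (p.1 ^ 2 - 6 * p.1 + 7) * p.1 * p.2 * |p.1 - p.2| *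
          Real.exp (-p.1 - 2 * p.2) := by
  have hexp : ∀ x y : ℝ, Real.exp (-x - 2*y) = Real.exp (-1*x) * Real.exp (-2*y) := by
    intro x y
    rw [← Real.exp_add]
    congr 1
    ring
  set F : ℝ × ℝ → ℝ := fun p =>
    (p.1 ^ 2 - 6 * p.1 + 7) * p.1 * p.2 * |p.1 - p.2| * Real.exp (-p.1 - 2 * p.2) with hF
  have hFc : Continuous F := by
    apply Continuous.mul ?_ (by fun_prop)
    exact Continuous.mul (by fun_prop) ((continuous_fst.sub continuous_snd).abs)
  -- 1-D integrable pieces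
  have hA1 : IntegrableOn (fun x : ℝ => (x^2+6*x+7)*x^2*Real.exp (-1*x)) (Ioi 0) := by
    have h := ((intOn_pow_exp 4 one_pos).add ((intOn_pow_exp 3 one_pos).const_mul 6)).add
      ((intOn_pow_exp 2 one_pos).const_mul 7)
    exact IntegrableOn.congr_fun h (fun x _ => by simp only [Pi.add_apply]; ring)
      measurableSet_Ioi
  have hA2 : IntegrableOn (fun x : ℝ => (x^2+6*x+7)*x*Real.exp (-1*x)) (Ioi 0) := by
    have h := ((intOn_pow_exp 3 one_pos).add ((intOn_pow_exp 2 one_pos).const_mul 6)).add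
      ((intOn_pow_exp 1 one_pos).const_mul 7)
    exact IntegrableOn.congr_fun h (fun x _ => by simp only [Pi.add_apply]; ring)
      measurableSet_Ioi
  have hB1 : IntegrableOn (fun y : ℝ => y^1*Real.exp (-2*y)) (Ioi 0) := intOn_pow_exp 1 two_pos
  have hB2 : IntegrableOn (fun y : ℝ => y^2*Real.exp (-2*y)) (Ioi 0) := intOn_pow_exp 2 two_pos
  have hg : Integrable (fun z : ℝ × ℝ =>
      ((z.1^2+6*z.1+7)*z.1^2*Real.exp (-1*z.1)) * (z.2^1*Real.exp (-2*z.2))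
      + ((z.1^2+6*z.1+7)*z.1*Real.exp (-1*z.1)) * (z.2^2*Real.exp (-2*z.2)))
      ((volume.restrict (Ioi (0:ℝ))).prod (volume.restrict (Ioi (0:ℝ)))) :=
    (hA1.mul_prod hB1).add (hA2.mul_prod hB2)
  have hF_int : Integrable F
      ((volume.restrict (Ioi (0:ℝ))).prod (volume.restrict (Ioi (0:ℝ)))) := by
    apply hg.mono hFc.aestronglyMeasurable
    rw [Measure.prod_restrict]
    filter_upwards [ae_restrict_mem (measurableSet_Ioi.prod measurableSet_Ioi)] with z hz
    obtain ⟨hz1, hz2⟩ := hz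
    simp only [mem_Ioi] at hz1 hz2
    set x := z.1
    set y := z.2
    have h7 : |x^2 - 6*x + 7| ≤ x^2 + 6*x + 7 := by
      rw [abs_le]
      constructor <;> nlinarith
    have hxy : |x - y| ≤ x + y := by
      rw [abs_le]
      constructor <;> nlinarith
    have hq : (0:ℝ) ≤ x^2 + 6*x + 7 := by nlinarith
    have habs : ‖F z‖ = |x^2 - 6*x + 7| * x * y * |x - y| * Real.exp (-x - 2*y) := by
      rw [hF]
      simp only [Real.norm_eq_abs]
      rw [abs_mul, abs_mul, abs_mul, abs_mul, abs_of_pos hz1, abs_of_pos hz2, abs_abs,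
        abs_of_pos (Real.exp_pos _)]
    rw [habs]
    have hrhs : (0:ℝ) ≤ ((x^2+6*x+7)*x^2*Real.exp (-1*x)) * (y^1*Real.exp (-2*y))
        + ((x^2+6*x+7)*x*Real.exp (-1*x)) * (y^2*Real.exp (-2*y)) := by
      have e1 : (0:ℝ) ≤ ((x^2+6*x+7)*x^2*Real.exp (-1*x)) * (y^1*Real.exp (-2*y)) := by
        apply mul_nonneg (mul_nonneg (mul_nonneg hq (by positivity)) (Real.exp_pos _).le)
        positivity
      have e2 : (0:ℝ) ≤ ((x^2+6*x+7)*x*Real.exp (-1*x)) * (y^2*Real.exp (-2*y)) := by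
        apply mul_nonneg (mul_nonneg (mul_nonneg hq hz1.le) (Real.exp_pos _).le)
        positivity
      linarith
    rw [Real.norm_eq_abs, abs_of_nonneg hrhs]
    calc |x^2 - 6*x + 7| * x * y * |x - y| * Real.exp (-x - 2*y)
        ≤ (x^2 + 6*x + 7) * x * y * (x + y) * Real.exp (-x - 2*y) := by
          have hbase : (0:ℝ) ≤ |x^2-6*x+7| * x * y := by positivity
          have step1 : |x^2 - 6*x + 7| * x * y * |x - y| ≤ |x^2-6*x+7| * x * y * (x+y) :=
            mul_le_mul_of_nonneg_left hxy hbase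
          have step2 : |x^2-6*x+7| * x * y * (x+y) ≤ (x^2+6*x+7) * x * y * (x+y) := by
            have : (0:ℝ) ≤ x * y * (x+y) := by positivity
            nlinarith [abs_nonneg (x^2-6*x+7)]
          have := le_trans step1 step2
          exact mul_le_mul_of_nonneg_right this (Real.exp_pos _).le
      _ = ((x^2+6*x+7)*x^2*Real.exp (-1*x)) * (y^1*Real.exp (-2*y))
            + ((x^2+6*x+7)*x*Real.exp (-1*x)) * (y^2*Real.exp (-2*y)) := by
          rw [hexp x y]
          ring
  have hF_int' : IntegrableOn F (Ioi (0:ℝ) ×ˢ Ioi (0:ℝ)) ((volume : Measure ℝ).prod volume) := by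
    rwa [IntegrableOn, ← Measure.prod_restrict]
  have key : (∫ p in Set.Ioi (0:ℝ) ×ˢ Set.Ioi (0:ℝ), F p) = 175/324 := by
    rw [Measure.volume_eq_prod ℝ ℝ, setIntegral_prod F hF_int']
    have hcongr : ∀ x ∈ Ioi (0:ℝ),
        (∫ y in Ioi (0:ℝ), F (x, y))
          = ((x^2 - 6*x + 7) * x * Real.exp (-1*x)) * ((x-1)/4 + Real.exp (-2*x) * (x+1)/2) := by
      intro x hx
      have : (fun y => F (x, y))
          = fun y => ((x^2 - 6*x + 7) * x * Real.exp (-1*x)) * (y * |x - y| * Real.exp (-2*y)) := by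
        funext y
        rw [hF]
        simp only
        rw [hexp x y]
        ring
      rw [this, integral_const_mul, inner_eval hx]
    rw [setIntegral_congr_fun measurableSet_Ioi hcongr, outer_eval]
  rw [hF] at key
  rw [key]
  norm_num
end

section
/- For every integer m ≥ 3, ∫_{(0,∞)^m} ( (λ_1 λ_2² + λ_1² λ_2 − 2 λ_1 λ_2 λ_m) / ((λ_1−λ_2)(λ_1−λ_m)(λ_2−λ_m)) ) e^{−λ_m} 𝓘(λ) dλ = 0, the integrand being absolutely integrable. -/
open MeasureTheory Finset

lemma abs_vdm_eq_det {m : ℕ} (x : Fin m → ℝ) :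
    |∏ i : Fin m, ∏ j ∈ Finset.Ioi i, (x i - x j)| = |(Matrix.vandermonde x).det| := by
  rw [Matrix.det_vandermonde]
  simp only [Finset.abs_prod]
  exact Finset.prod_congr rfl fun i _ => Finset.prod_congr rfl fun j _ => abs_sub_comm _ _

lemma abs_vdm_perm {m : ℕ} (x : Fin m → ℝ) (σ : Equiv.Perm (Fin m)) :
    |∏ i : Fin m, ∏ j ∈ Finset.Ioi i, (x (σ i) - x (σ j))| =
      |∏ i : Fin m, ∏ j ∈ Finset.Ioi i, (x i - x j)| := by
  rw [abs_vdm_eq_det (fun k => x (σ k)), abs_vdm_eq_det x]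
  have h1 : Matrix.vandermonde (fun k => x (σ k)) = (Matrix.vandermonde x).submatrix σ id := rfl
  rw [h1, Matrix.det_permute, abs_mul]
  rcases Int.units_eq_one_or (Equiv.Perm.sign σ) with h | h <;> simp [h]

lemma int_pow_exp (n : ℕ) : IntegrableOn (fun t : ℝ => t ^ n * Real.exp (-t)) (Set.Ioi 0) := by
  have h := Real.GammaIntegral_convergent (s := (n : ℝ) + 1) (by positivity)
  refine h.congr_fun (fun t ht => ?_) measurableSet_Ioi
  beta_reduce
  rw [add_sub_cancel_right, Real.rpow_natCast, mul_comm]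

lemma int_poly_exp (N : ℕ) :
    IntegrableOn (fun t : ℝ => (1 + t) ^ N * (t * Real.exp (-t))) (Set.Ioi 0) := by
  have hfun : (fun t : ℝ => (1 + t) ^ N * (t * Real.exp (-t))) =
      fun t => ∑ k ∈ Finset.range (N + 1), (N.choose k : ℝ) * (t ^ (k + 1) * Real.exp (-t)) := by
    funext t
    rw [add_comm (1 : ℝ) t, add_pow, Finset.sum_mul]
    refine Finset.sum_congr rfl fun k _ => ?_
    ring
  rw [hfun]
  exact integrable_finset_sum _ fun k _ => ((int_pow_exp (k + 1)).const_mul _)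

lemma int_prod_orthant (m N : ℕ) :
    IntegrableOn (fun x : Fin m → ℝ => ∏ k : Fin m, ((1 + x k) ^ N * (x k * Real.exp (-x k))))
      (Set.univ.pi fun _ : Fin m => Set.Ioi (0 : ℝ)) volume := by
  set h : ℝ → ℝ := fun t => (1 + t) ^ N * (t * Real.exp (-t)) with hh
  set ht : ℝ → ℝ := (Set.Ioi (0:ℝ)).indicator h with hht
  have hSm : MeasurableSet (Set.univ.pi fun _ : Fin m => Set.Ioi (0 : ℝ)) :=
    MeasurableSet.univ_pi fun _ => measurableSet_Ioi
  have hint : Integrable ht := (integrable_indicator_iff measurableSet_Ioi).2 (int_poly_exp N)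
  have hG : Integrable (fun x : Fin m → ℝ => ∏ k : Fin m, ht (x k)) :=
    Integrable.fintype_prod (f := fun _ : Fin m => ht) fun _ => hint
  refine (integrable_indicator_iff hSm).1 ?_
  have : (Set.univ.pi fun _ : Fin m => Set.Ioi (0 : ℝ)).indicator
      (fun x : Fin m → ℝ => ∏ k : Fin m, h (x k)) = fun x => ∏ k : Fin m, ht (x k) := by
    funext x
    by_cases hx : x ∈ Set.univ.pi fun _ : Fin m => Set.Ioi (0 : ℝ)
    · rw [Set.indicator_of_mem hx]
      exact Finset.prod_congr rfl fun k _ =>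
        (Set.indicator_of_mem (hx k (Set.mem_univ k)) h).symm
    · rw [Set.indicator_of_notMem hx]
      simp only [Set.mem_pi, Set.mem_univ, true_implies, not_forall] at hx
      obtain ⟨k, hk⟩ := hx
      exact (Finset.prod_eq_zero (Finset.mem_univ k) (Set.indicator_of_notMem hk h)).symm
  rw [this]
  exact hG

lemma key_bound {m : ℕ} (i0 i1 im : Fin m) (h01 : i0 < i1) (h0m : i0 < im) (h1m : i1 < im)
    (x : Fin m → ℝ) (hx : ∀ k, 0 < x k) :
    |(x i0 * x i1 ^ 2 + x i0 ^ 2 * x i1 - 2 * x i0 * x i1 * x im) /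
        ((x i0 - x i1) * (x i0 - x im) * (x i1 - x im)) * Real.exp (-x im) *
        (|∏ i : Fin m, ∏ j ∈ Finset.Ioi i, (x i - x j)| * ∏ j : Fin m, (x j * Real.exp (-x j)))|
      ≤ 4 * ∏ k : Fin m, ((1 + x k) ^ (m * m + 3) * (x k * Real.exp (-x k))) := by
  have hone_le : ∀ t : Finset (Fin m), (1 : ℝ) ≤ ∏ k ∈ t, (1 + x k) := by
    intro t
    calc (1 : ℝ) = ∏ _k ∈ t, (1 : ℝ) := by simp
      _ ≤ ∏ k ∈ t, (1 + x k) :=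
        Finset.prod_le_prod (fun k _ => zero_le_one) (fun k _ => by linarith [hx k])
  set Q : ℝ := ∏ k : Fin m, (1 + x k) with hQdef
  set P : ℝ := ∏ j : Fin m, (x j * Real.exp (-x j)) with hPdef
  have hQ1 : (1 : ℝ) ≤ Q := hone_le univ
  have hQ0 : (0 : ℝ) < Q := lt_of_lt_of_le one_pos hQ1
  have hP0 : (0 : ℝ) ≤ P :=
    Finset.prod_nonneg fun k _ => mul_nonneg (hx k).le (Real.exp_pos _).le
  have hRHS : (4 : ℝ) * ∏ k : Fin m, ((1 + x k) ^ (m * m + 3) * (x k * Real.exp (-x k)))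
      = 4 * (Q ^ (m * m + 3) * P) := by
    rw [Finset.prod_mul_distrib, Finset.prod_pow]
  rw [hRHS]
  have hRHS0 : (0 : ℝ) ≤ 4 * (Q ^ (m * m + 3) * P) :=
    mul_nonneg (by norm_num) (mul_nonneg (pow_nonneg hQ0.le _) hP0)
  have hxle : ∀ k, x k ≤ Q := by
    intro k
    have h1 := Finset.mul_prod_erase univ (fun k => 1 + x k) (Finset.mem_univ k)
    have h2 := hone_le (univ.erase k)
    have h3 : (1 + x k) * 1 ≤ (1 + x k) * ∏ j ∈ univ.erase k, (1 + x j) := by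
      apply mul_le_mul_of_nonneg_left h2 (by linarith [hx k])
    simp only [mul_one] at h3
    calc x k ≤ 1 + x k := by linarith
      _ ≤ (1 + x k) * ∏ j ∈ univ.erase k, (1 + x j) := h3
      _ = Q := h1
  have habsQ : ∀ i j : Fin m, i ≠ j → |x i - x j| ≤ Q := by
    intro i j hij
    have hp := Finset.prod_pair (f := fun k : Fin m => 1 + x k) hij
    have hsd := Finset.prod_sdiff (f := fun k : Fin m => 1 + x k)
      (Finset.subset_univ ({i, j} : Finset (Fin m)))
    have h2 : (1 + x i) * (1 + x j) ≤ Q := by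
      rw [← hp]
      calc ∏ k ∈ ({i, j} : Finset (Fin m)), (1 + x k)
          ≤ (∏ k ∈ univ \ ({i, j} : Finset (Fin m)), (1 + x k)) *
            ∏ k ∈ ({i, j} : Finset (Fin m)), (1 + x k) := by
            exact le_mul_of_one_le_left (le_trans zero_le_one (hone_le _)) (hone_le _)
        _ = Q := hsd
    have hi := hx i; have hj := hx j
    rw [abs_le]; constructor <;> nlinarith
  -- numerator bound
  have hnum : |x i0 * x i1 ^ 2 + x i0 ^ 2 * x i1 - 2 * x i0 * x i1 * x im| ≤ 4 * Q ^ 3 := by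
    have key : ∀ u v w : ℝ, 0 ≤ u → 0 ≤ v → 0 ≤ w → u ≤ Q → v ≤ Q → w ≤ Q →
        u * v * w ≤ Q ^ 3 := by
      intro u v w hu hv hw h1 h2 h3
      calc u * v * w ≤ Q * Q * Q :=
            mul_le_mul (mul_le_mul h1 h2 hv hQ0.le) h3 hw (mul_nonneg hQ0.le hQ0.le)
        _ = Q ^ 3 := by ring
    have h1 : x i0 * x i1 ^ 2 ≤ Q ^ 3 := by
      have := key (x i0) (x i1) (x i1) (hx i0).le (hx i1).le (hx i1).le
        (hxle i0) (hxle i1) (hxle i1)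
      nlinarith
    have h2 : x i0 ^ 2 * x i1 ≤ Q ^ 3 := by
      have := key (x i0) (x i0) (x i1) (hx i0).le (hx i0).le (hx i1).le
        (hxle i0) (hxle i0) (hxle i1)
      nlinarith
    have h3 : x i0 * x i1 * x im ≤ Q ^ 3 :=
      key _ _ _ (hx i0).le (hx i1).le (hx im).le (hxle i0) (hxle i1) (hxle im)
    have p1 : (0:ℝ) ≤ x i0 * x i1 ^ 2 := mul_nonneg (hx i0).le (sq_nonneg _)
    have p2 : (0:ℝ) ≤ x i0 ^ 2 * x i1 := mul_nonneg (sq_nonneg _) (hx i1).le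
    have p3 : (0:ℝ) ≤ x i0 * x i1 * x im :=
      mul_nonneg (mul_nonneg (hx i0).le (hx i1).le) (hx im).le
    rw [abs_le]; constructor <;> nlinarith
  -- Vandermonde factorization
  classical
  set s : Finset ((_ : Fin m) × Fin m) := Finset.univ.sigma fun i => Finset.Ioi i with hs
  set F : ((_ : Fin m) × Fin m) → ℝ := fun p => x p.1 - x p.2 with hF
  have hprod : ∏ i : Fin m, ∏ j ∈ Finset.Ioi i, (x i - x j) = ∏ p ∈ s, F p := by
    rw [hs, Finset.prod_sigma]
  set a : (_ : Fin m) × Fin m := ⟨i0, i1⟩ with hadef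
  set b : (_ : Fin m) × Fin m := ⟨i0, im⟩ with hbdef
  set c : (_ : Fin m) × Fin m := ⟨i1, im⟩ with hcdef
  have ha : a ∈ s := by simp [hs, hadef, Finset.mem_sigma, Finset.mem_Ioi, h01]
  have hb : b ∈ s := by simp [hs, hbdef, Finset.mem_sigma, Finset.mem_Ioi, h0m]
  have hc : c ∈ s := by simp [hs, hcdef, Finset.mem_sigma, Finset.mem_Ioi, h1m]
  have hbnea : b ≠ a := fun h => absurd (congrArg Sigma.snd h) (ne_of_gt h1m)
  have hcnea : c ≠ a := fun h => absurd (congrArg Sigma.fst h) (ne_of_gt h01)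
  have hcneb : c ≠ b := fun h => absurd (congrArg Sigma.fst h) (ne_of_gt h01)
  have hb' : b ∈ s.erase a := Finset.mem_erase.2 ⟨hbnea, hb⟩
  have hc' : c ∈ (s.erase a).erase b :=
    Finset.mem_erase.2 ⟨hcneb, Finset.mem_erase.2 ⟨hcnea, hc⟩⟩
  set s3 : Finset ((_ : Fin m) × Fin m) := ((s.erase a).erase b).erase c with hs3
  have hsplit : ∏ p ∈ s, F p = F a * (F b * (F c * ∏ p ∈ s3, F p)) := by
    calc ∏ p ∈ s, F p = F a * ∏ p ∈ s.erase a, F p := (Finset.mul_prod_erase _ _ ha).symm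
      _ = F a * (F b * ∏ p ∈ (s.erase a).erase b, F p) := by
          rw [Finset.mul_prod_erase _ F hb']
      _ = F a * (F b * (F c * ∏ p ∈ s3, F p)) := by
          rw [Finset.mul_prod_erase _ F hc']
  have hcard : s3.card ≤ m * m := by
    have hsub : s3 ⊆ s :=
      ((Finset.erase_subset _ _).trans (Finset.erase_subset _ _)).trans (Finset.erase_subset _ _)
    have h1 : s3.card ≤ s.card := Finset.card_le_card hsub
    have h2 : s.card ≤ m * m := by
      rw [hs, Finset.card_sigma]
      calc ∑ i : Fin m, (Finset.Ioi i).card ≤ ∑ _i : Fin m, m :=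
            Finset.sum_le_sum fun i _ => by
              simpa using Finset.card_le_univ (Finset.Ioi i)
        _ = m * m := by simp [Finset.sum_const, Finset.card_univ, mul_comm]
    omega
  have hRle : |∏ p ∈ s3, F p| ≤ Q ^ (m * m) := by
    rw [Finset.abs_prod]
    calc ∏ p ∈ s3, |F p| ≤ ∏ _p ∈ s3, Q := by
          apply Finset.prod_le_prod (fun p _ => abs_nonneg _)
          intro p hp
          have hps : p ∈ s := by
            exact (((Finset.erase_subset _ _).trans (Finset.erase_subset _ _)).trans
              (Finset.erase_subset _ _)) hp
          have : p.1 < p.2 := by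
            rw [hs] at hps
            simpa [Finset.mem_sigma, Finset.mem_Ioi] using hps
          exact habsQ _ _ (ne_of_lt this)
      _ = Q ^ s3.card := by rw [Finset.prod_const]
      _ ≤ Q ^ (m * m) := pow_le_pow_right₀ hQ1 hcard
  -- main case split
  by_cases hden : (x i0 - x i1) * (x i0 - x im) * (x i1 - x im) = 0
  · rw [hden, div_zero, zero_mul, zero_mul, abs_zero]
    exact hRHS0
  · have hD0 : |(x i0 - x i1) * (x i0 - x im) * (x i1 - x im)| ≠ 0 := abs_ne_zero.2 hden
    have hFabc : F a * (F b * F c) = (x i0 - x i1) * (x i0 - x im) * (x i1 - x im) := by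
      simp only [hF, hadef, hbdef, hcdef]
      ring
    have hDelta : |∏ i : Fin m, ∏ j ∈ Finset.Ioi i, (x i - x j)|
        = |(x i0 - x i1) * (x i0 - x im) * (x i1 - x im)| * |∏ p ∈ s3, F p| := by
      have hFa : F a = x i0 - x i1 := rfl
      have hFb : F b = x i0 - x im := rfl
      have hFc : F c = x i1 - x im := rfl
      rw [hprod, hsplit, hFa, hFb, hFc, abs_mul, abs_mul, abs_mul, abs_mul, abs_mul]
      ring
    rw [hDelta]
    rw [abs_mul, abs_mul, abs_div, abs_of_pos (Real.exp_pos _),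
      abs_of_nonneg (mul_nonneg (mul_nonneg (abs_nonneg _) (abs_nonneg _)) hP0)]
    have heq : |x i0 * x i1 ^ 2 + x i0 ^ 2 * x i1 - 2 * x i0 * x i1 * x im| /
          |(x i0 - x i1) * (x i0 - x im) * (x i1 - x im)| * Real.exp (-x im) *
          (|(x i0 - x i1) * (x i0 - x im) * (x i1 - x im)| * |∏ p ∈ s3, F p| * P)
        = |x i0 * x i1 ^ 2 + x i0 ^ 2 * x i1 - 2 * x i0 * x i1 * x im| * |∏ p ∈ s3, F p| *
          Real.exp (-x im) * P := by
      field_simp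
    rw [heq]
    have hexp1 : Real.exp (-x im) ≤ 1 := by
      rw [Real.exp_le_one_iff]
      linarith [hx im]
    calc |x i0 * x i1 ^ 2 + x i0 ^ 2 * x i1 - 2 * x i0 * x i1 * x im| * |∏ p ∈ s3, F p| *
          Real.exp (-x im) * P
        ≤ (4 * Q ^ 3) * Q ^ (m * m) * 1 * P := by
          apply mul_le_mul_of_nonneg_right _ hP0
          apply mul_le_mul _ hexp1 (Real.exp_pos _).le
            (mul_nonneg (mul_nonneg (by norm_num) (pow_nonneg hQ0.le 3)) (pow_nonneg hQ0.le _))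
          exact mul_le_mul hnum hRle (abs_nonneg _)
            (mul_nonneg (by norm_num) (pow_nonneg hQ0.le 3))
      _ = 4 * (Q ^ (m * m + 3) * P) := by rw [pow_add]; ring


theorem lemma_L5_K1 (m : ℕ) (hm : 3 ≤ m) :
    IntegrableOn
      (fun lam : Fin m → ℝ =>
        (lam ⟨0, by omega⟩ * lam ⟨1, by omega⟩ ^ 2 + lam ⟨0, by omega⟩ ^ 2 * lam ⟨1, by omega⟩ -
              2 * lam ⟨0, by omega⟩ * lam ⟨1, by omega⟩ * lam ⟨m - 1, by omega⟩) /
            ((lam ⟨0, by omega⟩ - lam ⟨1, by omega⟩) * (lam ⟨0, by omega⟩ - lam ⟨m - 1, by omega⟩) *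
              (lam ⟨1, by omega⟩ - lam ⟨m - 1, by omega⟩)) *
          Real.exp (-lam ⟨m - 1, by omega⟩) *
          (|∏ i : Fin m, ∏ j ∈ Finset.Ioi i, (lam i - lam j)| *
            ∏ j : Fin m, (lam j * Real.exp (-lam j))))
      (Set.univ.pi fun _ : Fin m => Set.Ioi (0 : ℝ)) volume ∧
    (∫ lam in (Set.univ.pi fun _ : Fin m => Set.Ioi (0 : ℝ)),
        (lam ⟨0, by omega⟩ * lam ⟨1, by omega⟩ ^ 2 + lam ⟨0, by omega⟩ ^ 2 * lam ⟨1, by omega⟩ -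
              2 * lam ⟨0, by omega⟩ * lam ⟨1, by omega⟩ * lam ⟨m - 1, by omega⟩) /
            ((lam ⟨0, by omega⟩ - lam ⟨1, by omega⟩) * (lam ⟨0, by omega⟩ - lam ⟨m - 1, by omega⟩) *
              (lam ⟨1, by omega⟩ - lam ⟨m - 1, by omega⟩)) *
          Real.exp (-lam ⟨m - 1, by omega⟩) *
          (|∏ i : Fin m, ∏ j ∈ Finset.Ioi i, (lam i - lam j)| *
            ∏ j : Fin m, (lam j * Real.exp (-lam j)))) = 0 := by
  have h0 : 0 < m := by omega
  have h1 : 1 < m := by omega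
  have hm1 : m - 1 < m := by omega
  set i0 : Fin m := ⟨0, h0⟩ with hi0
  set i1 : Fin m := ⟨1, h1⟩ with hi1
  set im : Fin m := ⟨m - 1, hm1⟩ with him
  have h01 : i0 < i1 := by simp [hi0, hi1, Fin.lt_def]
  have h0m : i0 < im := by simp [hi0, him, Fin.lt_def]; omega
  have h1m : i1 < im := by simp [hi1, him, Fin.lt_def]; omega
  set F : (Fin m → ℝ) → ℝ := fun lam =>
    (lam i0 * lam i1 ^ 2 + lam i0 ^ 2 * lam i1 - 2 * lam i0 * lam i1 * lam im) /
        ((lam i0 - lam i1) * (lam i0 - lam im) * (lam i1 - lam im)) *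
      Real.exp (-lam im) *
      (|∏ i : Fin m, ∏ j ∈ Finset.Ioi i, (lam i - lam j)| *
        ∏ j : Fin m, (lam j * Real.exp (-lam j))) with hF
  set S : Set (Fin m → ℝ) := Set.univ.pi fun _ : Fin m => Set.Ioi (0 : ℝ) with hSdef
  have hS : MeasurableSet S := MeasurableSet.univ_pi fun _ => measurableSet_Ioi
  have hmeas : Measurable F := by fun_prop
  have hint : IntegrableOn F S volume := by
    have hg : IntegrableOn
        (fun x : Fin m → ℝ => (4:ℝ) *
          ∏ k : Fin m, ((1 + x k) ^ (m * m + 3) * (x k * Real.exp (-x k)))) S volume :=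
      (int_prod_orthant m (m * m + 3)).const_mul 4
    refine Integrable.mono' hg hmeas.aestronglyMeasurable.restrict ?_
    refine (ae_restrict_iff' hS).2 (Filter.Eventually.of_forall fun x hx => ?_)
    have hxpos : ∀ k, 0 < x k := fun k => hx k (Set.mem_univ k)
    rw [Real.norm_eq_abs]
    exact key_bound i0 i1 im h01 h0m h1m x hxpos
  have goal2 : (∫ lam in S, F lam) = 0 := by
    set σ : Equiv.Perm (Fin m) := Equiv.swap i0 i1 with hσ
    set T := MeasurableEquiv.piCongrLeft (fun _ : Fin m => ℝ) σ with hT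
    have hMP : MeasurePreserving T volume volume :=
      volume_measurePreserving_piCongrLeft _ σ
    have hTj : ∀ (y : Fin m → ℝ) (j : Fin m), T y j = y (σ j) := by
      intro y j
      conv_lhs => rw [← Equiv.swap_apply_self i0 i1 j]
      rw [hT, MeasurableEquiv.coe_piCongrLeft]
      exact Equiv.piCongrLeft_apply_apply _ _ _ _
    have hσ0 : σ i0 = i1 := Equiv.swap_apply_left _ _
    have hσ1 : σ i1 = i0 := Equiv.swap_apply_right _ _
    have hσm : σ im = im :=
      Equiv.swap_apply_of_ne_of_ne (ne_of_gt h0m) (ne_of_gt h1m)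
    have hpre : T ⁻¹' S = S := by
      ext y
      simp only [Set.mem_preimage, hSdef, Set.mem_univ_pi, Set.mem_Ioi]
      constructor
      · intro h j
        have h2 := h (σ j)
        rw [hTj] at h2
        simpa [hσ, Equiv.swap_apply_self] using h2
      · intro h j
        rw [hTj]
        exact h (σ j)
    have hodd : ∀ y, F (T y) = - F y := by
      intro y
      rw [hF]
      simp only [hTj]
      rw [abs_vdm_perm y σ, Equiv.prod_comp σ (fun k => y k * Real.exp (-y k)),
        hσ0, hσ1, hσm]
      have hnum : y i1 * y i0 ^ 2 + y i1 ^ 2 * y i0 - 2 * y i1 * y i0 * y im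
          = y i0 * y i1 ^ 2 + y i0 ^ 2 * y i1 - 2 * y i0 * y i1 * y im := by ring
      have hd : (y i1 - y i0) * (y i1 - y im) * (y i0 - y im)
          = -((y i0 - y i1) * (y i0 - y im) * (y i1 - y im)) := by ring
      rw [hnum, hd, div_neg, neg_mul, neg_mul]
    have key := hMP.setIntegral_preimage_emb T.measurableEmbedding F S
    rw [hpre] at key
    simp only [hodd] at key
    rw [integral_neg] at key
    linarith
  exact ⟨hint, goal2⟩
end

section
/- Let m ≥ 3 be an integer and let i be an integer with 1 < i < m. Then ∫_{(0,∞)^m} (λ_1/(λ_1−λ_i)) e^{−λ_m} 𝓘(λ) dλ = (1/2) ∫_{(0,∞)^m} e^{−λ_m} 𝓘(λ) dλ, where both integrals are finite. -/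
open MeasureTheory Finset


private lemma pow_exp_int (kk : ℕ) : IntegrableOn (fun t : ℝ => t ^ kk * Real.exp (-t)) (Set.Ioi 0) := by
  have h := Real.GammaIntegral_convergent (s := (kk : ℝ) + 1) (by positivity)
  refine h.congr_fun (fun x hx => ?_) measurableSet_Ioi
  rw [add_sub_cancel_right]
  simp only [Real.rpow_natCast]
  rw [mul_comm]

private lemma one_add_pow_exp_int (n : ℕ) :
    IntegrableOn (fun t : ℝ => (1 + t) ^ n * Real.exp (-t)) (Set.Ioi 0) := by
  have h : ∀ t : ℝ, (1 + t) ^ n * Real.exp (-t) =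
      ∑ kk ∈ range (n + 1), (n.choose kk : ℝ) * (t ^ (n - kk) * Real.exp (-t)) := by
    intro t
    rw [add_pow, Finset.sum_mul]
    exact Finset.sum_congr rfl fun kk _ => by ring
  simp_rw [h]
  exact integrable_finset_sum _ fun kk _ => ((pow_exp_int (n - kk)).const_mul _)

private lemma vand_perm {m : ℕ} (σ : Equiv.Perm (Fin m)) (x : Fin m → ℝ) :
    |∏ p : Fin m, ∏ q ∈ Ioi p, (x (σ p) - x (σ q))| = |∏ p : Fin m, ∏ q ∈ Ioi p, (x p - x q)| := by
  have h1 : ∀ y : Fin m → ℝ, |∏ p : Fin m, ∏ q ∈ Ioi p, (y p - y q)| =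
      |(Matrix.vandermonde y).det| := by
    intro y
    rw [Matrix.det_vandermonde]
    simp only [abs_prod]
    exact Finset.prod_congr rfl fun p _ => Finset.prod_congr rfl fun q _ => abs_sub_comm _ _
  rw [h1 (fun p => x (σ p)), h1 x]
  have h2 : Matrix.vandermonde (fun p => x (σ p)) = (Matrix.vandermonde x).submatrix σ id := by
    ext p q; simp [Matrix.vandermonde]
  rw [h2, Matrix.det_permute]
  rcases Int.units_eq_one_or (Equiv.Perm.sign σ) with h | h <;> simp [h]

set_option maxHeartbeats 2000000 in
private theorem aux_main {m : ℕ} (z k l : Fin m) (hzk : z < k) (hzl : z ≠ l) (hkl : k ≠ l) :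
    IntegrableOn
      (fun lam : Fin m → ℝ =>
        lam z / (lam z - lam k) * Real.exp (-lam l) *
          (|∏ i : Fin m, ∏ j ∈ Finset.Ioi i, (lam i - lam j)| *
            ∏ j : Fin m, (lam j * Real.exp (-lam j))))
      (Set.univ.pi fun _ : Fin m => Set.Ioi (0 : ℝ)) volume ∧
    IntegrableOn
      (fun lam : Fin m → ℝ =>
        Real.exp (-lam l) *
          (|∏ i : Fin m, ∏ j ∈ Finset.Ioi i, (lam i - lam j)| *
            ∏ j : Fin m, (lam j * Real.exp (-lam j))))
      (Set.univ.pi fun _ : Fin m => Set.Ioi (0 : ℝ)) volume ∧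
    (∫ lam in (Set.univ.pi fun _ : Fin m => Set.Ioi (0 : ℝ)),
        lam z / (lam z - lam k) * Real.exp (-lam l) *
          (|∏ i : Fin m, ∏ j ∈ Finset.Ioi i, (lam i - lam j)| *
            ∏ j : Fin m, (lam j * Real.exp (-lam j)))) =
      1 / 2 *
        ∫ lam in (Set.univ.pi fun _ : Fin m => Set.Ioi (0 : ℝ)),
          Real.exp (-lam l) *
          (|∏ i : Fin m, ∏ j ∈ Finset.Ioi i, (lam i - lam j)| *
            ∏ j : Fin m, (lam j * Real.exp (-lam j))) := by
  set S : Set (Fin m → ℝ) := Set.univ.pi fun _ : Fin m => Set.Ioi (0 : ℝ) with hSdef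
  have hS : MeasurableSet S := MeasurableSet.univ_pi fun _ => measurableSet_Ioi
  set f1 : (Fin m → ℝ) → ℝ := fun lam =>
      lam z / (lam z - lam k) * Real.exp (-lam l) *
        (|∏ i : Fin m, ∏ j ∈ Finset.Ioi i, (lam i - lam j)| *
          ∏ j : Fin m, (lam j * Real.exp (-lam j))) with hf1def
  set f2 : (Fin m → ℝ) → ℝ := fun lam =>
      Real.exp (-lam l) *
        (|∏ i : Fin m, ∏ j ∈ Finset.Ioi i, (lam i - lam j)| *
          ∏ j : Fin m, (lam j * Real.exp (-lam j))) with hf2def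
  set σ : Equiv.Perm (Fin m) := Equiv.swap z k with hσdef
  set T := MeasurableEquiv.piCongrLeft (fun _ : Fin m => ℝ) σ with hTdef
  have hT : ∀ (x : Fin m → ℝ) (j : Fin m), T x j = x (σ j) := by
    intro x j
    simp [hTdef, hσdef, MeasurableEquiv.piCongrLeft, Equiv.piCongrLeft]
  -- measure preserving on restricted measure
  have hTpres : MeasurePreserving T volume volume :=
    volume_measurePreserving_piCongrLeft _ σ
  have hTS : T ⁻¹' S = S := by
    ext x
    simp only [hSdef, Set.mem_preimage, Set.mem_pi, Set.mem_univ, forall_true_left,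
      Set.mem_Ioi]
    constructor
    · intro h j
      have := h (σ j)
      rwa [hT, hσdef, Equiv.swap_apply_self] at this
    · intro h j
      rw [hT]; exact h _
  have hTrpres : MeasurePreserving T (volume.restrict S) (volume.restrict S) := by
    refine ⟨T.measurable, ?_⟩
    conv_rhs => rw [← hTpres.map_eq]
    rw [Measure.restrict_map T.measurable hS, hTS]
  -- the composed function
  have hcomp1 : ∀ x : Fin m → ℝ, f1 (T x) =
      x k / (x k - x z) * Real.exp (-x l) *
        (|∏ i : Fin m, ∏ j ∈ Finset.Ioi i, (x i - x j)| *
          ∏ j : Fin m, (x j * Real.exp (-x j))) := by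
    intro x
    have h0 : T x z = x k := by rw [hT, hσdef, Equiv.swap_apply_left]
    have h1 : T x k = x z := by rw [hT, hσdef, Equiv.swap_apply_right]
    have h2 : T x l = x l := by
      rw [hT, hσdef, Equiv.swap_apply_of_ne_of_ne (Ne.symm hzl) (Ne.symm hkl)]
    have h3 : |∏ p : Fin m, ∏ q ∈ Ioi p, (T x p - T x q)| =
        |∏ p : Fin m, ∏ q ∈ Ioi p, (x p - x q)| := by
      simp_rw [hT]; exact vand_perm σ x
    have h4 : (∏ j : Fin m, (T x j * Real.exp (-T x j))) =
        ∏ j : Fin m, (x j * Real.exp (-x j)) := by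
      simp_rw [hT]
      exact Equiv.prod_comp σ (fun j => x j * Real.exp (-x j))
    rw [hf1def]
    simp only []
    rw [h0, h1, h2, h3, h4]
  -- pointwise sum identity
  have hsum : ∀ x : Fin m → ℝ, f1 x + f1 (T x) = f2 x := by
    intro x
    rw [hcomp1 x, hf1def, hf2def]
    simp only []
    by_cases h : x z = x k
    · have hV : (∏ p : Fin m, ∏ q ∈ Ioi p, (x p - x q)) = 0 :=
        Finset.prod_eq_zero (mem_univ z)
          (Finset.prod_eq_zero (Finset.mem_Ioi.mpr hzk) (by rw [h, sub_self]))
      rw [hV]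
      simp [h]
    · have h' : x z - x k ≠ 0 := sub_ne_zero.mpr h
      have h'' : x k - x z ≠ 0 := sub_ne_zero.mpr (Ne.symm h)
      field_simp
      ring
  have hf1int : IntegrableOn f1 S volume := by
    set n : ℕ := m * m + m + 2 with hndef
    set φ : ℝ → ℝ := (Set.Ioi (0:ℝ)).indicator (fun t => (1 + t) ^ n * Real.exp (-t)) with hφdef
    have hφint : Integrable φ volume := by
      rw [hφdef, integrable_indicator_iff measurableSet_Ioi]
      exact one_add_pow_exp_int n
    have hFint : Integrable (fun x : Fin m → ℝ => ∏ j, φ (x j)) volume :=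
      Integrable.fintype_prod (𝕜 := ℝ) fun _ => hφint
    have hf1meas : AEStronglyMeasurable f1 (volume.restrict S) := by
      refine Measurable.aestronglyMeasurable ?_
      rw [hf1def]
      fun_prop
    refine Integrable.mono' hFint.integrableOn hf1meas ?_
    rw [ae_restrict_iff' hS]
    refine ae_of_all _ fun x hx => ?_
    rw [hSdef] at hx
    have hxp : ∀ j, 0 < x j := fun j => hx j (Set.mem_univ j)
    set P : ℝ := ∏ j, (1 + x j) with hPdef
    have hgen : ∀ s : Finset (Fin m), (1:ℝ) ≤ ∏ j ∈ s, (1 + x j) := by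
      intro s
      calc (1:ℝ) = ∏ _j ∈ s, (1:ℝ) := by simp
      _ ≤ ∏ j ∈ s, (1 + x j) :=
        Finset.prod_le_prod (fun j _ => by norm_num) (fun j _ => by linarith [hxp j])
    have hP1 : (1:ℝ) ≤ P := hgen univ
    have hle : ∀ p, x p ≤ P := by
      intro p
      rw [hPdef, ← Finset.mul_prod_erase univ _ (mem_univ p)]
      nlinarith [hgen (univ.erase p), hxp p]
    have hfac : ∀ p q, |x p - x q| ≤ P := by
      intro p q
      rcases le_total (x p) (x q) with h | h
      · rw [abs_sub_comm, abs_of_nonneg (by linarith)]; linarith [hle q, hxp p]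
      · rw [abs_of_nonneg (by linarith)]; linarith [hle p, hxp q]
    have hIoi : ∀ (s : Finset (Fin m)) (p : Fin m), (∏ q ∈ s, |x p - x q|) ≤ P ^ m := by
      intro s p
      refine le_trans (Finset.prod_le_prod (fun q _ => abs_nonneg _) (fun q _ => hfac p q)) ?_
      rw [Finset.prod_const]
      refine pow_le_pow_right₀ hP1 ?_
      simpa using Finset.card_le_univ s
    have hC : |∏ p : Fin m, ∏ q ∈ Ioi p, (x p - x q)| =
        ∏ p : Fin m, ∏ q ∈ Ioi p, |x p - x q| := by
      rw [abs_prod]; exact Finset.prod_congr rfl fun p _ => abs_prod _ _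
    have hinner_z : (∏ q ∈ Ioi z, |x z - x q|) =
        |x z - x k| * ∏ q ∈ (Ioi z).erase k, |x z - x q| :=
      (Finset.mul_prod_erase _ _ (Finset.mem_Ioi.mpr hzk)).symm
    have houter : (∏ p : Fin m, ∏ q ∈ Ioi p, |x p - x q|) =
        (∏ q ∈ Ioi z, |x z - x q|) * ∏ p ∈ univ.erase z, ∏ q ∈ Ioi p, |x p - x q| :=
      (Finset.mul_prod_erase _ _ (mem_univ z)).symm
    have houterb : (∏ p ∈ univ.erase z, ∏ q ∈ Ioi p, |x p - x q|) ≤ P ^ (m * m) := by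
      refine le_trans (Finset.prod_le_prod
        (fun p _ => Finset.prod_nonneg fun q _ => abs_nonneg _) (fun p _ => hIoi _ p)) ?_
      rw [Finset.prod_const, ← pow_mul]
      refine pow_le_pow_right₀ hP1 ?_
      have : (univ.erase z).card ≤ m := by simpa using Finset.card_le_univ (univ.erase z)
      calc m * (univ.erase z).card ≤ m * m := Nat.mul_le_mul_left m this
      _ = m * m := rfl
    have hA : |x z / (x z - x k)| * |x z - x k| ≤ P := by
      rcases eq_or_ne (x z - x k) 0 with h | h
      · rw [h, abs_zero, mul_zero]; linarith
      · rw [← abs_mul, div_mul_cancel₀ _ h, abs_of_pos (hxp z)]; exact hle z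
    have hD : (∏ j, x j * Real.exp (-x j)) ≤ P * ∏ j, Real.exp (-x j) := by
      rw [← Finset.prod_mul_distrib]
      exact Finset.prod_le_prod (fun j _ => mul_nonneg (hxp j).le (Real.exp_pos _).le)
        (fun j _ => mul_le_mul_of_nonneg_right (by linarith [hxp j]) (Real.exp_pos _).le)
    have hE : Real.exp (-x l) ≤ 1 := by
      rw [← Real.exp_zero]; exact Real.exp_le_exp.mpr (by linarith [hxp l])
    have hφx : ∏ j, φ (x j) = P ^ n * ∏ j, Real.exp (-x j) := by
      rw [hφdef]
      have h1 : ∀ j ∈ (univ : Finset (Fin m)), (Set.Ioi (0:ℝ)).indicator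
          (fun t => (1 + t) ^ n * Real.exp (-t)) (x j) = (1 + x j) ^ n * Real.exp (-x j) :=
        fun j _ => Set.indicator_of_mem (hxp j) _
      rw [Finset.prod_congr rfl h1, Finset.prod_mul_distrib, Finset.prod_pow]
    have hnorm : ‖f1 x‖ = (|x z / (x z - x k)| * |x z - x k|) *
        (∏ q ∈ (Ioi z).erase k, |x z - x q|) *
        (∏ p ∈ univ.erase z, ∏ q ∈ Ioi p, |x p - x q|) *
        Real.exp (-x l) * (∏ j, x j * Real.exp (-x j)) := by
      rw [hf1def]
      simp only []
      rw [Real.norm_eq_abs, abs_mul, abs_mul, abs_mul, abs_abs,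
        abs_of_pos (Real.exp_pos _),
        abs_of_pos (Finset.prod_pos fun j _ => mul_pos (hxp j) (Real.exp_pos _)),
        hC, houter, hinner_z]
      ring
    rw [hnorm, hφx]
    calc (|x z / (x z - x k)| * |x z - x k|) *
        (∏ q ∈ (Ioi z).erase k, |x z - x q|) *
        (∏ p ∈ univ.erase z, ∏ q ∈ Ioi p, |x p - x q|) *
        Real.exp (-x l) * (∏ j, x j * Real.exp (-x j))
        ≤ P * P ^ m * P ^ (m * m) * 1 * (P * ∏ j, Real.exp (-x j)) := by
          gcongr
          all_goals first
            | exact hA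
            | exact hIoi _ z
            | exact houterb
            | exact hE
            | exact hD
            | exact Finset.prod_nonneg fun j _ => mul_nonneg (hxp j).le (Real.exp_pos _).le
            | positivity
      _ = P ^ n * ∏ j, Real.exp (-x j) := by rw [hndef]; ring
  have htwistint : IntegrableOn (fun x => f1 (T x)) S volume :=
    (hTrpres.integrable_comp_emb T.measurableEmbedding).mpr hf1int
  have hf2int : IntegrableOn f2 S volume :=
    IntegrableOn.congr_fun (hf1int.add htwistint) (fun x _ => hsum x) hS
  refine ⟨hf1int, hf2int, ?_⟩
  have hint_twist : (∫ x in S, f1 (T x)) = ∫ x in S, f1 x :=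
    hTrpres.integral_comp T.measurableEmbedding f1
  have key : (∫ x in S, f2 x) = (∫ x in S, f1 x) + ∫ x in S, f1 (T x) := by
    rw [← integral_add hf1int htwistint]
    exact setIntegral_congr_fun hS fun x _ => (hsum x).symm
  rw [key, hint_twist]
  ring


theorem lemma_L5_N (m : ℕ) (hm : 3 ≤ m) (i : ℕ) (hi1 : 1 < i) (him : i < m) :
    IntegrableOn
      (fun lam : Fin m → ℝ =>
        lam ⟨0, by omega⟩ / (lam ⟨0, by omega⟩ - lam ⟨i - 1, by omega⟩) * Real.exp (-lam ⟨m - 1, by omega⟩) *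
          (|∏ i : Fin m, ∏ j ∈ Finset.Ioi i, (lam i - lam j)| *
            ∏ j : Fin m, (lam j * Real.exp (-lam j))))
      (Set.univ.pi fun _ : Fin m => Set.Ioi (0 : ℝ)) volume ∧
    IntegrableOn
      (fun lam : Fin m → ℝ =>
        Real.exp (-lam ⟨m - 1, by omega⟩) *
          (|∏ i : Fin m, ∏ j ∈ Finset.Ioi i, (lam i - lam j)| *
            ∏ j : Fin m, (lam j * Real.exp (-lam j))))
      (Set.univ.pi fun _ : Fin m => Set.Ioi (0 : ℝ)) volume ∧
    (∫ lam in (Set.univ.pi fun _ : Fin m => Set.Ioi (0 : ℝ)),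
        lam ⟨0, by omega⟩ / (lam ⟨0, by omega⟩ - lam ⟨i - 1, by omega⟩) * Real.exp (-lam ⟨m - 1, by omega⟩) *
          (|∏ i : Fin m, ∏ j ∈ Finset.Ioi i, (lam i - lam j)| *
            ∏ j : Fin m, (lam j * Real.exp (-lam j)))) =
      1 / 2 *
        ∫ lam in (Set.univ.pi fun _ : Fin m => Set.Ioi (0 : ℝ)),
          Real.exp (-lam ⟨m - 1, by omega⟩) *
          (|∏ i : Fin m, ∏ j ∈ Finset.Ioi i, (lam i - lam j)| *
            ∏ j : Fin m, (lam j * Real.exp (-lam j))) := by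
  exact aux_main ⟨0, by omega⟩ ⟨i - 1, by omega⟩ ⟨m - 1, by omega⟩
    (by simp only [Fin.mk_lt_mk]; omega)
    (by simp only [ne_eq, Fin.mk.injEq]; omega)
    (by simp only [ne_eq, Fin.mk.injEq]; omega)
end
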